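/- Let μ₁ and μ₂ be finite Borel measures on ℝ. If there exist real numbers a < b such that ∫ e^{-αt} dμ₁(t) = ∫ e^{-αt} dμ₂(t) < ∞ for all α ∈ (a,b), then μ₁ = μ₂. -/

import Mathlib

open MeasureTheory Set
open scoped ENNReal

section LaplaceAux

open Filter Topology
open scoped NNReal

lemma ext_of_Cc (ν₁ ν₂ : Measure ℝ) [IsFiniteMeasure ν₁] [IsFiniteMeasure ν₂]
    (h : ∀ f : ℝ → ℝ, Continuous f → HasCompactSupport f → ∫ t, f t ∂ν₁ = ∫ t, f t ∂ν₂) :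
    ν₁ = ν₂ := by
  have key : ∀ u v : ℝ, ν₁ (Icc u v) = ν₂ (Icc u v) := by
    intro u v
    rcases le_or_gt u v with huv | huv
    · have hcl : IsClosed (Icc u v) := isClosed_Icc
      have hδ : ∀ n : ℕ, (0:ℝ) < 1 / (n + 1) := fun n => Nat.one_div_pos_of_nat
      have hlim : Tendsto (fun n : ℕ => (1:ℝ) / (n + 1)) atTop (𝓝 0) :=
        tendsto_one_div_add_atTop_nhds_zero_nat
      have t1 := tendsto_lintegral_thickenedIndicator_of_isClosed ν₁ hcl hδ hlim
      have t2 := tendsto_lintegral_thickenedIndicator_of_isClosed ν₂ hcl hδ hlim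
      have heq : ∀ n : ℕ, (∫⁻ t, (thickenedIndicator (hδ n) (Icc u v) t : ℝ≥0∞) ∂ν₁)
          = ∫⁻ t, (thickenedIndicator (hδ n) (Icc u v) t : ℝ≥0∞) ∂ν₂ := by
        intro n
        set g : ℝ → ℝ := fun t => ((thickenedIndicator (hδ n) (Icc u v) t : ℝ≥0) : ℝ) with hg
        have hgc : Continuous g :=
          NNReal.continuous_coe.comp (thickenedIndicator (hδ n) (Icc u v)).continuous
        have hgs : HasCompactSupport g := by
          apply HasCompactSupport.intro (isCompact_Icc (a := u - 1/(n+1)) (b := v + 1/(n+1)))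
          intro x hx
          have hnot : x ∉ Metric.thickening (1/(n+1)) (Icc u v) := by
            intro hmem
            rcases Metric.mem_thickening_iff.mp hmem with ⟨y, hy, hd⟩
            obtain ⟨h1, h2⟩ := abs_lt.mp (by simpa [Real.dist_eq] using hd)
            exact hx ⟨by linarith [hy.1, one_div ((n:ℝ)+1)], by linarith [hy.2, one_div ((n:ℝ)+1)]⟩
          simp only [hg, thickenedIndicator_apply]
          rw [thickenedIndicatorAux_zero (hδ n) _ hnot]
          simp
        have hint : ∀ (ν : Measure ℝ) [IsFiniteMeasure ν], Integrable g ν := by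
          intro ν _
          refine ⟨hgc.aestronglyMeasurable, ?_⟩
          apply MeasureTheory.HasFiniteIntegral.of_bounded (C := 1)
          filter_upwards with x
          simp only [hg, Real.norm_eq_abs, abs_of_nonneg (NNReal.coe_nonneg _)]
          exact_mod_cast thickenedIndicator_le_one (hδ n) _ x
        have h1 : (∫⁻ t, (thickenedIndicator (hδ n) (Icc u v) t : ℝ≥0∞) ∂ν₁)
            = ENNReal.ofReal (∫ t, g t ∂ν₁) := lintegral_coe_eq_integral _ (hint ν₁)
        have h2 : (∫⁻ t, (thickenedIndicator (hδ n) (Icc u v) t : ℝ≥0∞) ∂ν₂)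
            = ENNReal.ofReal (∫ t, g t ∂ν₂) := lintegral_coe_eq_integral _ (hint ν₂)
        rw [h1, h2, h g hgc hgs]
      simp only [heq] at t1
      exact tendsto_nhds_unique t1 t2
    · simp [Icc_eq_empty_of_lt huv]
  have hIoc : ∀ u v : ℝ, u < v → ν₁ (Ioc u v) = ν₂ (Ioc u v) := by
    intro u v huv
    have hmono : Monotone (fun n : ℕ => Icc (u + (v - u) / (n + 1)) v) := by
      intro m n hmn
      apply Icc_subset_Icc_left
      gcongr
      all_goals first | linarith | exact_mod_cast hmn
    have hun : ∀ ν : Measure ℝ, ν (Ioc u v) = ⨆ n : ℕ, ν (Icc (u + (v - u) / (n + 1)) v) := by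
      intro ν
      rw [← hmono.directed_le.measure_iUnion]
      congr 1
      ext x
      simp only [mem_iUnion, mem_Icc, mem_Ioc]
      constructor
      · rintro ⟨hx1, hx2⟩
        obtain ⟨n, hn⟩ := exists_nat_gt ((v - u) / (x - u))
        rw [div_lt_iff₀ (sub_pos.mpr hx1)] at hn
        refine ⟨n, ?_, hx2⟩
        have : (v - u) / (n + 1) ≤ x - u := by
          rw [div_le_iff₀ (by positivity)]
          nlinarith
        linarith
      · rintro ⟨n, hn1, hn2⟩
        have : (0:ℝ) < (v - u) / (n + 1) := div_pos (by linarith) (by positivity)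
        exact ⟨by linarith, hn2⟩
    rw [hun ν₁, hun ν₂]
    exact iSup_congr fun n => key _ _
  exact Measure.ext_of_Ioc ν₁ ν₂ hIoc

section CharFun
open Complex Submodule Real

lemma integrable_of_bdd {X : Type*} [MeasurableSpace X] {ν : Measure X} [IsFiniteMeasure ν]
    {E : Type*} [NormedAddCommGroup E] {f : X → E} (hm : AEStronglyMeasurable f ν) {C : ℝ}
    (hC : ∀ x, ‖f x‖ ≤ C) : Integrable f ν :=
  ⟨hm, MeasureTheory.HasFiniteIntegral.of_bounded (ae_of_all _ hC)⟩

lemma cont_integral {X : Type*} [MeasurableSpace X] [TopologicalSpace X] [CompactSpace X]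
    [OpensMeasurableSpace X] (ρ : Measure X) [IsFiniteMeasure ρ] :
    Continuous (fun g : C(X, ℂ) => ∫ x, g x ∂ρ) := by
  refine (LipschitzWith.of_dist_le_mul (K := (ρ Set.univ).toNNReal) ?_).continuous
  intro g g'
  rw [dist_eq_norm, ← integral_sub]
  · calc ‖∫ x, (g x - g' x) ∂ρ‖ ≤ (dist g g') * (ρ Set.univ).toReal := by
          apply norm_integral_le_of_norm_le_const
          filter_upwards with x
          rw [← dist_eq_norm]
          exact ContinuousMap.dist_apply_le_dist x
        _ ≤ _ := by
          rw [mul_comm, ENNReal.coe_toNNReal_eq_toReal]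
  · exact integrable_of_bdd g.continuous.aestronglyMeasurable g.norm_coe_le_norm
  · exact integrable_of_bdd g'.continuous.aestronglyMeasurable g'.norm_coe_le_norm

lemma map_addCircle_eq (T : ℝ) [hT : Fact (0 < T)] (ν₁ ν₂ : Measure ℝ)
    [IsFiniteMeasure ν₁] [IsFiniteMeasure ν₂]
    (h : ∀ y : ℝ, ∫ t, Complex.exp (y * t * Complex.I) ∂ν₁
        = ∫ t, Complex.exp (y * t * Complex.I) ∂ν₂) :
    ν₁.map ((↑) : ℝ → AddCircle T) = ν₂.map ((↑) : ℝ → AddCircle T) := by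
  set ρ₁ := ν₁.map ((↑) : ℝ → AddCircle T) with hρ₁
  set ρ₂ := ν₂.map ((↑) : ℝ → AddCircle T) with hρ₂
  have hint : ∀ (ρ : Measure (AddCircle T)) [IsFiniteMeasure ρ] (g : C(AddCircle T, ℂ)),
      Integrable g ρ := fun ρ _ g =>
    integrable_of_bdd g.continuous.aestronglyMeasurable g.norm_coe_le_norm
  -- the submodule of functions with equal integrals
  have hkey : ∀ g : C(AddCircle T, ℂ), ∫ x, g x ∂ρ₁ = ∫ x, g x ∂ρ₂ := by
    set M : Submodule ℂ C(AddCircle T, ℂ) :=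
      { carrier := {g | ∫ x, g x ∂ρ₁ = ∫ x, g x ∂ρ₂}
        add_mem' := by
          intro g g' hg hg'
          simp only [Set.mem_setOf_eq, ContinuousMap.add_apply] at *
          rw [integral_add (hint ρ₁ g) (hint ρ₁ g'), integral_add (hint ρ₂ g) (hint ρ₂ g'),
            hg, hg']
        zero_mem' := by simp
        smul_mem' := by
          intro c g hg
          simp only [Set.mem_setOf_eq, ContinuousMap.smul_apply] at *
          rw [integral_smul, integral_smul, hg] } with hM
    have hclosed : IsClosed (M : Set C(AddCircle T, ℂ)) :=
      isClosed_eq (cont_integral ρ₁) (cont_integral ρ₂)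
    have hspan : Submodule.span ℂ (Set.range (@fourier T)) ≤ M := by
      rw [Submodule.span_le]
      rintro - ⟨n, rfl⟩
      show ∫ x, fourier n x ∂ρ₁ = ∫ x, fourier n x ∂ρ₂
      rw [hρ₁, hρ₂, integral_map AddCircle.measurable_mk'.aemeasurable
          (fourier n).continuous.aestronglyMeasurable,
        integral_map AddCircle.measurable_mk'.aemeasurable
          (fourier n).continuous.aestronglyMeasurable]
      have harg : ∀ t : ℝ, fourier n ((t : ℝ) : AddCircle T)
          = Complex.exp ((2 * π * n / T : ℝ) * t * Complex.I) := by
        intro t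
        rw [fourier_coe_apply]
        congr 1
        push_cast
        have : (T : ℂ) ≠ 0 := by
          exact_mod_cast (ne_of_gt hT.out)
        field_simp
      simp_rw [harg]
      exact h _
    intro g
    have htop : (Submodule.span ℂ (Set.range (@fourier T))).topologicalClosure = ⊤ :=
      span_fourier_closure_eq_top
    have : g ∈ (Submodule.span ℂ (Set.range (@fourier T))).topologicalClosure := by
      rw [htop]; trivial
    have hg : g ∈ closure ((Submodule.span ℂ (Set.range (@fourier T))) : Set _) := by
      rw [← Submodule.topologicalClosure_coe, htop]
      trivial
    exact hclosed.closure_subset_iff.mpr hspan hg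
  -- conclude measures equal
  apply ext_of_forall_lintegral_eq_of_IsFiniteMeasure
  intro f
  have hfi : ∀ (ρ : Measure (AddCircle T)) [IsFiniteMeasure ρ],
      Integrable (fun x => (f x : ℝ)) ρ := by
    intro ρ _
    obtain ⟨C, hC⟩ := f.bounded
    refine integrable_of_bdd (C := C + (f 0 : ℝ)) ?_ ?_
    · exact (NNReal.continuous_coe.comp f.continuous).aestronglyMeasurable
    · intro x
      have := hC x 0
      rw [NNReal.dist_eq] at this
      have habs := abs_le.mp this
      rw [Real.norm_eq_abs, _root_.abs_of_nonneg (f x).coe_nonneg]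
      linarith [habs.1, habs.2]
  have h1 : (∫⁻ x, (f x : ℝ≥0∞) ∂ρ₁) = ENNReal.ofReal (∫ x, (f x : ℝ) ∂ρ₁) :=
    lintegral_coe_eq_integral _ (hfi ρ₁)
  have h2 : (∫⁻ x, (f x : ℝ≥0∞) ∂ρ₂) = ENNReal.ofReal (∫ x, (f x : ℝ) ∂ρ₂) :=
    lintegral_coe_eq_integral _ (hfi ρ₂)
  rw [h1, h2]
  congr 1
  have := hkey ⟨fun x => ((f x : ℝ) : ℂ), by continuity⟩
  simp only [ContinuousMap.coe_mk] at this
  have e1 : ∫ (x : AddCircle T), ((((f x : ℝ)) : ℂ)) ∂ρ₁ = ((∫ x, (f x : ℝ) ∂ρ₁ : ℝ) : ℂ) :=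
    integral_ofReal
  have e2 : ∫ (x : AddCircle T), ((((f x : ℝ)) : ℂ)) ∂ρ₂ = ((∫ x, (f x : ℝ) ∂ρ₂ : ℝ) : ℂ) :=
    integral_ofReal
  rw [e1, e2] at this
  exact_mod_cast this

lemma ext_of_char (ν₁ ν₂ : Measure ℝ) [IsFiniteMeasure ν₁] [IsFiniteMeasure ν₂]
    (h : ∀ y : ℝ, ∫ t, Complex.exp (y * t * Complex.I) ∂ν₁
        = ∫ t, Complex.exp (y * t * Complex.I) ∂ν₂) :
    ν₁ = ν₂ := by
  apply ext_of_Cc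
  intro f hfc hfs
  -- bound for f
  obtain ⟨C, hC⟩ : ∃ C : ℝ, ∀ x, ‖f x‖ ≤ C := by
    obtain ⟨C, hC⟩ := (hfc.norm).bounded_above_of_compact_support hfs.norm
    exact ⟨C, fun x => by simpa using hC x⟩
  have hC0 : 0 ≤ C := le_trans (norm_nonneg _) (hC 0)
  -- radius of support
  obtain ⟨R, hR0, hRsupp⟩ : ∃ R : ℝ, 0 < R ∧ tsupport f ⊆ Metric.closedBall 0 R := by
    obtain ⟨R, hR⟩ := hfs.isBounded.subset_closedBall 0
    exact ⟨max R 1, lt_of_lt_of_le one_pos (le_max_right _ _),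
      hR.trans (Metric.closedBall_subset_closedBall (le_max_left _ _))⟩
  have hzero : ∀ x : ℝ, R < |x| → f x = 0 := by
    intro x hx
    apply image_eq_zero_of_notMem_tsupport
    intro hmem
    have := hRsupp hmem
    simp only [Metric.mem_closedBall, Real.dist_eq, sub_zero] at this
    linarith
  -- the sequence of periods
  set T : ℕ → ℝ := fun n => 2 * (R + 1 + n) with hT
  have hTpos : ∀ n, 0 < T n := by
    intro n; simp only [hT]; positivity
  have hhalf : ∀ n, R < T n / 2 := by
    intro n; simp only [hT]; push_cast; nlinarith [Nat.cast_nonneg (α := ℝ) n]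
  -- the lifted functions
  set F : ℕ → ℝ → ℝ := fun n t =>
    AddCircle.liftIco (hp := ⟨hTpos n⟩) (T n) (-(T n / 2)) f ((t : ℝ) : AddCircle (T n)) with hF
  have hbF : ∀ n t, ‖F n t‖ ≤ C := by
    intro n t
    simp only [hF, AddCircle.liftIco, Function.comp_apply]
    exact hC _
  have hcontF : ∀ n, Continuous (AddCircle.liftIco (hp := ⟨hTpos n⟩) (T n) (-(T n / 2)) f) := by
    intro n
    apply AddCircle.liftIco_continuous (hp := ⟨hTpos n⟩)
    · have h1 : f (-(T n / 2)) = 0 := hzero _ (by rw [abs_neg, abs_of_pos (by linarith [hhalf n, hR0])]; exact hhalf n)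
      have h2 : f (-(T n / 2) + T n) = 0 := by
        apply hzero
        rw [abs_of_pos] <;> [skip; skip] <;> linarith [hhalf n, hR0]
      rw [h1, h2]
    · exact hfc.continuousOn
  have hFt : ∀ n t, t ∈ Set.Ico (-(T n / 2)) (T n / 2) → F n t = f t := by
    intro n t ht
    haveI : Fact (0 < T n) := ⟨hTpos n⟩
    simp only [hF]
    rw [AddCircle.liftIco_coe_apply]
    constructor
    · exact ht.1
    · linarith [ht.2]
  -- pointwise convergence
  have hconv : ∀ (ν : Measure ℝ) [IsFiniteMeasure ν],
      Tendsto (fun n => ∫ t, F n t ∂ν) atTop (𝓝 (∫ t, f t ∂ν)) := by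
    intro ν _
    apply tendsto_integral_of_dominated_convergence (fun _ => C)
    · intro n
      exact ((hcontF n).comp (AddCircle.continuous_mk' (T n))).aestronglyMeasurable
    · exact integrable_const C
    · intro n
      filter_upwards with t using hbF n t
    · filter_upwards with t
      obtain ⟨N, hN⟩ := exists_nat_gt (|t|)
      apply tendsto_const_nhds.congr'
      filter_upwards [eventually_ge_atTop N] with n hn
      refine (hFt n t ⟨?_, ?_⟩).symm
      · have : |t| < T n / 2 := by
          simp only [hT]; push_cast
          calc |t| < N := hN
            _ ≤ (n : ℝ) := by exact_mod_cast hn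
            _ ≤ (2 * (R + 1 + n)) / 2 := by nlinarith [hR0]
        linarith [abs_lt.mp this |>.1]
      · have : |t| < T n / 2 := by
          simp only [hT]; push_cast
          calc |t| < N := hN
            _ ≤ (n : ℝ) := by exact_mod_cast hn
            _ ≤ (2 * (R + 1 + n)) / 2 := by nlinarith [hR0]
        linarith [abs_lt.mp this |>.1, abs_lt.mp this |>.2]
  -- equality at each n
  have heqn : ∀ n, ∫ t, F n t ∂ν₁ = ∫ t, F n t ∂ν₂ := by
    intro n
    haveI : Fact (0 < T n) := Fact.mk (hTpos n)
    have hmap := map_addCircle_eq (T n) ν₁ ν₂ h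
    simp only [hF]
    rw [← integral_map AddCircle.measurable_mk'.aemeasurable (hcontF n).aestronglyMeasurable,
      ← integral_map AddCircle.measurable_mk'.aemeasurable (hcontF n).aestronglyMeasurable,
      hmap]
  exact tendsto_nhds_unique ((hconv ν₁).congr heqn) (hconv ν₂)

end CharFun

section Analytic
open Filter Topology Complex Metric

lemma char_eq_of_laplace_eq (ν₁ ν₂ : Measure ℝ) [IsFiniteMeasure ν₁] [IsFiniteMeasure ν₂]
    (δ : ℝ) (hδ : 0 < δ)
    (hint : ∀ s : ℝ, |s| ≤ 2 * δ →
      Integrable (fun t => Real.exp (s * t)) ν₁ ∧ Integrable (fun t => Real.exp (s * t)) ν₂)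
    (heq : ∀ s : ℝ, |s| < δ →
      ∫ t, Real.exp (s * t) ∂ν₁ = ∫ t, Real.exp (s * t) ∂ν₂) :
    ∀ y : ℝ, ∫ t, Complex.exp (y * t * Complex.I) ∂ν₁
      = ∫ t, Complex.exp (y * t * Complex.I) ∂ν₂ := by
  set S : Set ℂ := {z | z.re ∈ Ioo (-δ) δ} with hS
  have hSopen : IsOpen S := isOpen_Ioo.preimage Complex.continuous_re
  have hSconv : Convex ℝ S := (convex_Ioo (-δ) δ).linear_preimage Complex.reLm
  set G : Measure ℝ → ℂ → ℂ := fun ν z => ∫ t, Complex.exp (z * t) ∂ν with hG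
  -- integrability of the complex exponential
  have hintC : ∀ (ν : Measure ℝ), (ν = ν₁ ∨ ν = ν₂) → ∀ z : ℂ, |z.re| ≤ 2 * δ →
      Integrable (fun t : ℝ => Complex.exp (z * t)) ν := by
    rintro ν hν z hz
    have hre : Integrable (fun t => Real.exp (z.re * t)) ν := by
      rcases hν with rfl | rfl
      exacts [(hint z.re hz).1, (hint z.re hz).2]
    refine hre.mono' ?_ ?_
    · apply Continuous.aestronglyMeasurable
      exact Complex.continuous_exp.comp (continuous_const.mul Complex.continuous_ofReal)
    · filter_upwards with t
      rw [Complex.norm_exp]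
      simp [Complex.mul_re, Real.norm_eq_abs, _root_.abs_of_nonneg (Real.exp_nonneg _)]
  -- the dominating function for the derivative
  have hbound : ∀ (ν : Measure ℝ), (ν = ν₁ ∨ ν = ν₂) →
      Integrable (fun t : ℝ => (1 / δ) * (Real.exp (2 * δ * t) + Real.exp (-(2 * δ) * t))) ν := by
    rintro ν hν
    have h1 : Integrable (fun t => Real.exp (2 * δ * t)) ν := by
      rcases hν with rfl | rfl
      · exact (hint (2 * δ) (show |2*δ| ≤ 2*δ by rw [abs_of_pos (by positivity)])).1
      · exact (hint (2 * δ) (show |2*δ| ≤ 2*δ by rw [abs_of_pos (by positivity)])).2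
    have h2 : Integrable (fun t => Real.exp (-(2 * δ) * t)) ν := by
      rcases hν with rfl | rfl
      · exact (hint (-(2 * δ)) (show |(-(2*δ))| ≤ 2*δ by rw [abs_neg, abs_of_pos (by positivity)])).1
      · exact (hint (-(2 * δ)) (show |(-(2*δ))| ≤ 2*δ by rw [abs_neg, abs_of_pos (by positivity)])).2
    exact (h1.add h2).const_mul _
  -- key pointwise bound
  have hptbound : ∀ (z : ℂ) (t : ℝ), |z.re| ≤ δ →
      ‖t * Complex.exp (z * t)‖ ≤ (1 / δ) * (Real.exp (2 * δ * t) + Real.exp (-(2 * δ) * t)) := by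
    intro z t hz
    have h1 : ‖(t : ℂ) * Complex.exp (z * t)‖ = |t| * Real.exp (z.re * t) := by
      rw [norm_mul, Complex.norm_exp, Complex.norm_real, Real.norm_eq_abs]
      simp
    rw [h1]
    have h2 : |t| ≤ (1 / δ) * Real.exp (δ * |t|) := by
      have h3 : δ * |t| ≤ Real.exp (δ * |t|) := by
        nlinarith [Real.add_one_le_exp (δ * |t|), abs_nonneg t]
      calc |t| = (1 / δ) * (δ * |t|) := by field_simp
        _ ≤ (1 / δ) * Real.exp (δ * |t|) := by gcongr
    have h4 : Real.exp (z.re * t) ≤ Real.exp (δ * |t|) := by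
      apply Real.exp_le_exp.mpr
      calc z.re * t ≤ |z.re * t| := le_abs_self _
        _ = |z.re| * |t| := abs_mul _ _
        _ ≤ δ * |t| := by gcongr
    calc |t| * Real.exp (z.re * t) ≤ ((1 / δ) * Real.exp (δ * |t|)) * Real.exp (δ * |t|) :=
          mul_le_mul h2 h4 (Real.exp_nonneg _) (by positivity)
      _ = (1 / δ) * Real.exp (2 * δ * |t|) := by
          rw [mul_assoc, ← Real.exp_add]; ring_nf
      _ ≤ (1 / δ) * (Real.exp (2 * δ * t) + Real.exp (-(2 * δ) * t)) := by
          gcongr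
          rcases abs_cases t with ⟨h, _⟩ | ⟨h, _⟩
          · rw [h]
            nlinarith [Real.exp_nonneg (-(2*δ) * t)]
          · rw [h]
            have harg : 2 * δ * -t = -(2*δ) * t := by ring
            rw [harg]
            linarith [Real.exp_nonneg (2 * δ * t)]
  -- differentiability on the strip
  have hdiff : ∀ (ν : Measure ℝ), (ν = ν₁ ∨ ν = ν₂) → DifferentiableOn ℂ (G ν) S := by
    intro ν hν
    intro z₀ hz₀
    apply DifferentiableAt.differentiableWithinAt
    have hz₀' : |z₀.re| < δ := abs_lt.mpr ⟨hz₀.1, hz₀.2⟩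
    set ε : ℝ := δ - |z₀.re| with hε
    have hε0 : 0 < ε := by simp only [hε]; linarith
    have key := hasDerivAt_integral_of_dominated_loc_of_deriv_le (μ := ν)
      (F := fun z t => Complex.exp (z * t)) (x₀ := z₀)
      (F' := fun z t => t * Complex.exp (z * t))
      (bound := fun t => (1 / δ) * (Real.exp (2 * δ * t) + Real.exp (-(2 * δ) * t)))
      (Metric.ball_mem_nhds z₀ hε0) ?_ ?_ ?_ ?_ ?_ ?_
    · exact key.2.differentiableAt
    · filter_upwards with z
      exact (Complex.continuous_exp.comp
        (continuous_const.mul Complex.continuous_ofReal)).aestronglyMeasurable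
    · exact hintC ν hν z₀ (by linarith)
    · apply Continuous.aestronglyMeasurable
      exact Complex.continuous_ofReal.mul
        (Complex.continuous_exp.comp (continuous_const.mul Complex.continuous_ofReal))
    · filter_upwards with t z hz
      apply hptbound
      have : |z.re - z₀.re| ≤ ‖z - z₀‖ := by
        rw [← Complex.sub_re]
        exact abs_re_le_norm _
      have hd : ‖z - z₀‖ < ε := by rwa [mem_ball, dist_eq_norm] at hz
      have := abs_sub_abs_le_abs_sub z.re z₀.re
      linarith [abs_lt.mp (lt_of_le_of_lt ‹|z.re - z₀.re| ≤ ‖z - z₀‖› hd)]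
    · exact hbound ν hν
    · filter_upwards with t z _
      have : HasDerivAt (fun z : ℂ => z * t) (t : ℂ) z := by
        simpa using (hasDerivAt_id z).mul_const (t : ℂ)
      simpa [mul_comm] using (this.cexp)
  -- analytic
  have hana : ∀ (ν : Measure ℝ), (ν = ν₁ ∨ ν = ν₂) → AnalyticOnNhd ℂ (G ν) S := by
    intro ν hν
    exact (hdiff ν hν).analyticOnNhd hSopen
  -- equality on the real segment
  have hreal : ∀ s : ℝ, |s| < δ → G ν₁ (s : ℂ) = G ν₂ (s : ℂ) := by
    intro s hs
    have : ∀ (ν : Measure ℝ), G ν (s : ℂ) = ((∫ t, Real.exp (s * t) ∂ν : ℝ) : ℂ) := by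
      intro ν
      have e1 : ∫ (t : ℝ), (((Real.exp (s * t)) : ℝ) : ℂ) ∂ν
          = ((∫ t, Real.exp (s * t) ∂ν : ℝ) : ℂ) := integral_ofReal
      simp only [hG]
      rw [← e1]
      congr 1
      funext t
      rw [Complex.ofReal_exp]
      norm_cast
    rw [this ν₁, this ν₂, heq s hs]
  -- frequently equal near 0
  have hfreq : ∃ᶠ z in 𝓝[≠] (0 : ℂ), G ν₁ z = G ν₂ z := by
    have htend : Tendsto (fun n : ℕ => ((δ / 2 / (n + 1) : ℝ) : ℂ)) atTop (𝓝[≠] (0 : ℂ)) := by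
      rw [tendsto_nhdsWithin_iff]
      constructor
      · have : Tendsto (fun n : ℕ => (δ / 2 / (n + 1) : ℝ)) atTop (𝓝 0) := by
          apply Tendsto.div_atTop (tendsto_const_nhds)
          exact tendsto_atTop_add_const_right _ _ tendsto_natCast_atTop_atTop
        exact Complex.ofReal_zero ▸ (Complex.continuous_ofReal.tendsto 0).comp this
      · filter_upwards with n
        simp only [mem_compl_iff, mem_singleton_iff]
        intro hzero
        have : (δ / 2 / ((n : ℝ) + 1)) = 0 := by exact_mod_cast hzero
        have hpos : 0 < δ / 2 / ((n : ℝ) + 1) := by positivity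
        linarith
    apply htend.frequently
    apply Frequently.of_forall
    intro n
    apply hreal
    rw [abs_of_pos (by positivity)]
    calc δ / 2 / ((n : ℝ) + 1) ≤ δ / 2 / 1 := by
          apply div_le_div_of_nonneg_left (by positivity) one_pos
          linarith [Nat.cast_nonneg (α := ℝ) n]
      _ < δ := by linarith
    -- done
  have h0S : (0 : ℂ) ∈ S := by
    simp only [hS, mem_setOf_eq, Complex.zero_re, mem_Ioo]
    constructor <;> linarith
  have hEq : EqOn (G ν₁) (G ν₂) S :=
    (hana ν₁ (Or.inl rfl)).eqOn_of_preconnected_of_frequently_eq (hana ν₂ (Or.inr rfl))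
      hSconv.isPreconnected h0S hfreq
  intro y
  have hyS : (Complex.I * y) ∈ S := by
    simp only [hS, mem_setOf_eq, Complex.mul_re, Complex.I_re, Complex.I_im, Complex.ofReal_re,
      Complex.ofReal_im, mem_Ioo]
    constructor <;> simp <;> linarith
  have := hEq hyS
  simp only [hG] at this
  have harg : ∀ t : ℝ, Complex.I * y * t = (y : ℂ) * t * Complex.I := by intro t; ring
  simp_rw [harg] at this
  exact this

end Analytic

end LaplaceAux

open Filter Topology in
open scoped NNReal in
/-- **Injectivity of the two-sided Laplace transform.**
If two finite Borel measures on `ℝ` have equal and finite Laplace transforms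
`∫ e^{-α t} dμᵢ(t)` for all `α` in a nonempty open interval `(a,b)`, then they are equal. -/
theorem laplace_transform_injective (μ₁ μ₂ : Measure ℝ)
    [IsFiniteMeasure μ₁] [IsFiniteMeasure μ₂] (a b : ℝ) (hab : a < b)
    (h : ∀ α ∈ Set.Ioo a b,
      (∫⁻ t, ENNReal.ofReal (Real.exp (-α * t)) ∂μ₁)
        = (∫⁻ t, ENNReal.ofReal (Real.exp (-α * t)) ∂μ₂) ∧
      (∫⁻ t, ENNReal.ofReal (Real.exp (-α * t)) ∂μ₁) < ∞) :
    μ₁ = μ₂ := by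
  set c : ℝ := (a + b) / 2 with hc
  set δ : ℝ := (b - a) / 8 with hδdef
  have hδ : 0 < δ := by rw [hδdef]; linarith
  set d : ℝ → ℝ≥0∞ := fun t => ENNReal.ofReal (Real.exp (-c * t)) with hd
  have hdm : Measurable d := (Real.measurable_exp.comp (measurable_id.const_mul _)).ennreal_ofReal
  set ν₁ : Measure ℝ := μ₁.withDensity d with hν₁
  set ν₂ : Measure ℝ := μ₂.withDensity d with hν₂
  -- transform of the tilted measure
  have hlt : ∀ (μ : Measure ℝ) (s : ℝ),
      (∫⁻ t, ENNReal.ofReal (Real.exp (s * t)) ∂(μ.withDensity d))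
        = ∫⁻ t, ENNReal.ofReal (Real.exp (-(c - s) * t)) ∂μ := by
    intro μ s
    have hgm : Measurable (fun t : ℝ => ENNReal.ofReal (Real.exp (s * t))) :=
      ((measurable_id.const_mul s).exp).ennreal_ofReal
    rw [lintegral_withDensity_eq_lintegral_mul μ hdm hgm]
    congr 1
    funext t
    simp only [hd, Pi.mul_apply]
    rw [← ENNReal.ofReal_mul (Real.exp_nonneg _), ← Real.exp_add]
    congr 2
    ring
  have hmem : ∀ s : ℝ, |s| ≤ 2 * δ → c - s ∈ Set.Ioo a b := by
    intro s hs
    rw [hδdef] at hs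
    obtain ⟨h1, h2⟩ := abs_le.mp hs
    refine ⟨?_, ?_⟩ <;> rw [hc] <;> linarith
  -- finiteness of tilted measures
  have hfin : ∀ (μ : Measure ℝ), (μ = μ₁ ∨ μ = μ₂) → IsFiniteMeasure (μ.withDensity d) := by
    rintro μ hμ
    constructor
    rw [withDensity_apply _ MeasurableSet.univ, Measure.restrict_univ]
    have h0 : (∫⁻ t, d t ∂μ) = ∫⁻ t, ENNReal.ofReal (Real.exp (-(c - 0) * t)) ∂μ := by
      simp only [hd, sub_zero]
    have hcmem : c - 0 ∈ Set.Ioo a b := hmem 0 (by simp [abs_of_nonneg]; positivity)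
    rcases hμ with rfl | rfl
    · rw [h0]; exact ((h _ hcmem).2)
    · rw [h0, ← (h _ hcmem).1]; exact ((h _ hcmem).2)
  haveI hf1 : IsFiniteMeasure ν₁ := hfin μ₁ (Or.inl rfl)
  haveI hf2 : IsFiniteMeasure ν₂ := hfin μ₂ (Or.inr rfl)
  -- finite lintegral of the exponential wrt tilted measures, and equality
  have hlfin : ∀ s : ℝ, |s| ≤ 2 * δ →
      (∫⁻ t, ENNReal.ofReal (Real.exp (s * t)) ∂ν₁)
        = (∫⁻ t, ENNReal.ofReal (Real.exp (s * t)) ∂ν₂) ∧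
      (∫⁻ t, ENNReal.ofReal (Real.exp (s * t)) ∂ν₁) < ∞ := by
    intro s hs
    rw [hν₁, hν₂, hlt μ₁ s, hlt μ₂ s]
    exact h _ (hmem s hs)
  -- integrability
  have hint : ∀ s : ℝ, |s| ≤ 2 * δ →
      Integrable (fun t => Real.exp (s * t)) ν₁ ∧ Integrable (fun t => Real.exp (s * t)) ν₂ := by
    intro s hs
    have hmeas : AEStronglyMeasurable (fun t : ℝ => Real.exp (s * t)) ν₁ ∧
        AEStronglyMeasurable (fun t : ℝ => Real.exp (s * t)) ν₂ := by
      constructor <;>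
        exact (Real.continuous_exp.comp (continuous_const.mul continuous_id)).aestronglyMeasurable
    have hnn : ∀ (ν : Measure ℝ), (∫⁻ t, ‖Real.exp (s * t)‖ₑ ∂ν)
        = ∫⁻ t, ENNReal.ofReal (Real.exp (s * t)) ∂ν := by
      intro ν
      congr 1
      funext t
      rw [Real.enorm_eq_ofReal_abs, abs_of_nonneg (Real.exp_nonneg _)]
    constructor
    · exact ⟨hmeas.1, by rw [hasFiniteIntegral_def, hnn ν₁]; exact (hlfin s hs).2⟩
    · refine ⟨hmeas.2, ?_⟩
      rw [hasFiniteIntegral_def, hnn ν₂, ← (hlfin s hs).1]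
      exact (hlfin s hs).2
  -- real integral equality
  have heq : ∀ s : ℝ, |s| < δ →
      ∫ t, Real.exp (s * t) ∂ν₁ = ∫ t, Real.exp (s * t) ∂ν₂ := by
    intro s hs
    have hs' : |s| ≤ 2 * δ := by linarith [hs]
    have hm : ∀ (ν : Measure ℝ), AEStronglyMeasurable (fun t : ℝ => Real.exp (s * t)) ν :=
      fun ν => Continuous.aestronglyMeasurable (by continuity)
    have e1 : ∫ t, Real.exp (s * t) ∂ν₁
        = (∫⁻ t, ENNReal.ofReal (Real.exp (s * t)) ∂ν₁).toReal :=
      integral_eq_lintegral_of_nonneg_ae (ae_of_all _ fun t => Real.exp_nonneg _) (hm ν₁)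
    have e2 : ∫ t, Real.exp (s * t) ∂ν₂
        = (∫⁻ t, ENNReal.ofReal (Real.exp (s * t)) ∂ν₂).toReal :=
      integral_eq_lintegral_of_nonneg_ae (ae_of_all _ fun t => Real.exp_nonneg _) (hm ν₂)
    rw [e1, e2, (hlfin s hs').1]
  -- characteristic functions agree, hence tilted measures agree
  have hν : ν₁ = ν₂ := ext_of_char ν₁ ν₂ (char_eq_of_laplace_eq ν₁ ν₂ δ hδ hint heq)
  -- recover the original measures
  set d' : ℝ → ℝ≥0∞ := fun t => ENNReal.ofReal (Real.exp (c * t)) with hd'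
  have hd'm : Measurable d' := (Real.measurable_exp.comp (measurable_id.const_mul _)).ennreal_ofReal
  have hrec : ∀ μ : Measure ℝ, (μ.withDensity d).withDensity d' = μ := by
    intro μ
    rw [← withDensity_mul μ hdm hd'm]
    have : (d * d') = 1 := by
      funext t
      simp only [hd, hd', Pi.mul_apply, Pi.one_apply]
      rw [← ENNReal.ofReal_mul (Real.exp_nonneg _), ← Real.exp_add]
      norm_num
    rw [this, withDensity_one]
  calc μ₁ = (μ₁.withDensity d).withDensity d' := (hrec μ₁).symm
    _ = (μ₂.withDensity d).withDensity d' := by rw [← hν₁, ← hν₂, hν]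
    _ = μ₂ := hrec μ₂
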